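/- Let I be a proper ideal of a commutative ring R such that √I is a prime ideal. Then I is a 2-absorbing primary ideal of R. -/
import Mathlib

/-- A proper ideal `I` is 2-absorbing primary if `a*b*c ∈ I` implies
`a*b ∈ I` or `a*c ∈ √I` or `b*c ∈ √I`. -/
def IsTwoAbsPrimary {R : Type*} [CommRing R] (I : Ideal R) : Prop :=
  I ≠ ⊤ ∧ ∀ a b c : R, a * b * c ∈ I → a * b ∈ I ∨ a * c ∈ I.radical ∨ b * c ∈ I.radical

/-- A proper submodule `N` of `M` is pseudo-absorbing primary if `(N :_R M)`
is a 2-absorbing primary ideal of `R`. -/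
def IsPseudoAbsPrimary {R M : Type*} [CommRing R] [AddCommGroup M] [Module R M]
    (N : Submodule R M) : Prop :=
  N ≠ ⊤ ∧ IsTwoAbsPrimary (N.colon ⊤)

/-- `M` is a pseudo-absorbing primary multiplication module if every
pseudo-absorbing primary submodule `N` satisfies `N = I • M` for some ideal `I`. -/
def IsPAPMultiplication (R M : Type*) [CommRing R] [AddCommGroup M] [Module R M] : Prop :=
  ∀ N : Submodule R M, IsPseudoAbsPrimary N → ∃ I : Ideal R, N = I • (⊤ : Submodule R M)

/-- If the radical of a proper ideal I is prime, then I is 2-absorbing primary. -/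
theorem stmt_12 {R : Type*} [CommRing R] (I : Ideal R) (hI : I ≠ ⊤)
    (h : I.radical.IsPrime) : IsTwoAbsPrimary I := by
  refine ⟨hI, fun a b c habc => ?_⟩
  have hr : a * b * c ∈ I.radical := I.le_radical habc
  rcases h.mul_mem_iff_mem_or_mem.mp hr with hab | hc
  · rcases h.mul_mem_iff_mem_or_mem.mp hab with ha | hb
    · exact Or.inr (Or.inl (I.radical.mul_mem_right c ha))
    · exact Or.inr (Or.inr (I.radical.mul_mem_right c hb))
  · exact Or.inr (Or.inl (I.radical.mul_mem_left a hc))
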